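/- Let A ∈ ℝ^{n×n}, C ∈ ℝ^{q×n}, and suppose the pair (−Aᵀ, C) is observable, i.e. ⋂_{k=0}^{n−1} ker(C(−Aᵀ)^k) = {0}. Let λ₀ ∈ ℝ^n be nonzero and define λ(t) = exp(−tAᵀ)λ₀ and the output z(t) = Cλ(t). Then for every t_f > 0, the zero set {t ∈ [0, t_f] : z(t) = 0} is finite. -/

import Mathlib

open Matrix

attribute [local instance] Matrix.linftyOpNormedRing Matrix.linftyOpNormedAlgebra

/-- **Outputs of an observable adjoint system vanish only finitely often.** Let the pair
`(−Aᵀ, C)` be observable, let `λ₀ ≠ 0`, and let `λ(t) = exp(−tAᵀ)λ₀` solve the adjoint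
equation with output `z(t) = Cλ(t)`. Then for every `t_f > 0` the zero set
`{t ∈ [0, t_f] : z(t) = 0}` is finite. -/
theorem observable_adjoint_output_finite_zero_set {n q : ℕ}
    (A : Matrix (Fin n) (Fin n) ℝ) (C : Matrix (Fin q) (Fin n) ℝ)
    (hobs : ∀ v : Fin n → ℝ, (∀ k : ℕ, k < n → C.mulVec (((-Aᵀ) ^ k).mulVec v) = 0) → v = 0)
    (l0 : Fin n → ℝ) (hl0 : l0 ≠ 0) (tf : ℝ) (htf : 0 < tf) :
    {t ∈ Set.Icc (0 : ℝ) tf |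
      C.mulVec ((NormedSpace.exp ((-t) • Aᵀ)).mulVec l0) = 0}.Finite := by
  set M : Matrix (Fin n) (Fin n) ℝ := -Aᵀ with hM
  -- the output map as a continuous linear map on matrices
  have hsmul : ∀ t : ℝ, (-t) • Aᵀ = t • M := by
    intro t; simp [hM, neg_smul, smul_neg]
  set L : Matrix (Fin n) (Fin n) ℝ →ₗ[ℝ] (Fin q → ℝ) :=
    { toFun := fun X => C.mulVec (X.mulVec l0)
      map_add' := by intro X Y; simp [Matrix.add_mulVec, Matrix.mulVec_add]
      map_smul' := by intro c X; simp [Matrix.smul_mulVec, Matrix.mulVec_smul] } with hL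
  set f : ℝ → (Fin q → ℝ) := fun t => L (NormedSpace.exp (t • M)) with hf
  have hfe : ∀ t : ℝ, C.mulVec ((NormedSpace.exp ((-t) • Aᵀ)).mulVec l0) = f t := by
    intro t; rw [hsmul t]; rfl
  have hset : {t ∈ Set.Icc (0 : ℝ) tf |
      C.mulVec ((NormedSpace.exp ((-t) • Aᵀ)).mulVec l0) = 0}
      = {t ∈ Set.Icc (0 : ℝ) tf | f t = 0} := by
    ext t; simp only [Set.mem_setOf_eq, hfe t]
  rw [hset]
  by_contra hfin
  have hinf : {t ∈ Set.Icc (0 : ℝ) tf | f t = 0}.Infinite := hfin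
  obtain ⟨x, -, hx⟩ := hinf.exists_accPt_of_subset_isCompact isCompact_Icc
    (Set.sep_subset _ _)
  -- f is analytic on ℝ
  have hanal : AnalyticOnNhd ℝ f Set.univ := by
    intro t _
    have h1 : AnalyticAt ℝ (fun s : ℝ => s • M) t :=
      (ContinuousLinearMap.toSpanSingleton ℝ M).analyticAt t
    have h2 : AnalyticAt ℝ (NormedSpace.exp :
        Matrix (Fin n) (Fin n) ℝ → Matrix (Fin n) (Fin n) ℝ) ((fun s : ℝ => s • M) t) :=
      NormedSpace.exp_analytic _
    have h21 : AnalyticAt ℝ (fun s : ℝ => NormedSpace.exp (s • M)) t := by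
      have := AnalyticAt.comp_of_eq (f := fun s : ℝ => s • M) (x := t) h2 h1 rfl
      exact this
    have h3 : AnalyticAt ℝ (L.toContinuousLinearMap :
        Matrix (Fin n) (Fin n) ℝ → (Fin q → ℝ))
        ((fun s : ℝ => NormedSpace.exp (s • M)) t) :=
      L.toContinuousLinearMap.analyticAt _
    have := AnalyticAt.comp_of_eq (x := t) h3 h21 rfl
    exact this
  -- frequently zero near the accumulation point
  have hfreq : ∃ᶠ z in nhdsWithin x {x}ᶜ, f z = 0 := by
    have h0 : ∃ᶠ z in nhdsWithin x {x}ᶜ, z ∈ {t ∈ Set.Icc (0 : ℝ) tf | f t = 0} :=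
      Filter.frequently_mem_iff_neBot.mpr hx
    exact h0.mono fun z hz => hz.2
  have hzero : Set.EqOn f 0 Set.univ :=
    hanal.eqOn_zero_of_preconnected_of_frequently_eq_zero isPreconnected_univ
      (Set.mem_univ x) hfreq
  -- derive that all observability products vanish
  have key : ∀ (k : ℕ) (t : ℝ),
      (C * M ^ k).mulVec ((NormedSpace.exp (t • M)).mulVec l0) = 0 := by
    intro k
    induction k with
    | zero =>
      intro t
      have := hzero (Set.mem_univ t)
      simpa [hf, hL, pow_zero, mul_one] using this
    | succ k ih =>
      intro t
      -- the function t ↦ (C * M^k).mulVec (exp(tM) l0) is identically 0; differentiate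
      set G : Matrix (Fin n) (Fin n) ℝ →ₗ[ℝ] (Fin q → ℝ) :=
        { toFun := fun X => (C * M ^ k).mulVec (X.mulVec l0)
          map_add' := by intro X Y; simp [Matrix.add_mulVec, Matrix.mulVec_add]
          map_smul' := by intro c X; simp [Matrix.smul_mulVec, Matrix.mulVec_smul] }
        with hG
      have hd : HasDerivAt (fun s : ℝ => G.toContinuousLinearMap (NormedSpace.exp (s • M)))
          (G.toContinuousLinearMap (M * NormedSpace.exp (t • M))) t :=
        G.toContinuousLinearMap.hasFDerivAt.comp_hasDerivAt t
          (hasDerivAt_exp_smul_const' M t)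
      have hzero' : HasDerivAt (fun s : ℝ => G.toContinuousLinearMap (NormedSpace.exp (s • M)))
          0 t := by
        have : (fun s : ℝ => G.toContinuousLinearMap (NormedSpace.exp (s • M)))
            = fun _ => (0 : Fin q → ℝ) := by
          funext s
          simpa [hG] using ih s
        rw [this]
        exact hasDerivAt_const t 0
      have huniq := hd.unique hzero'
      have : (C * M ^ k).mulVec ((M * NormedSpace.exp (t • M)).mulVec l0) = 0 := by
        exact huniq
      have hmat : C * M ^ (k+1) * NormedSpace.exp (t • M)
          = C * M ^ k * (M * NormedSpace.exp (t • M)) := by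
        rw [pow_succ, ← Matrix.mul_assoc, Matrix.mul_assoc (C * M ^ k)]
      rw [Matrix.mulVec_mulVec, hmat, ← Matrix.mulVec_mulVec]
      exact this
  have : l0 = 0 := by
    apply hobs
    intro k _
    have := key k 0
    rw [Matrix.mulVec_mulVec]
    simpa [zero_smul, NormedSpace.exp_zero] using this
  exact hl0 this
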